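/- For all integers n ≥ 1 and k ≥ 0, the number of Dyck paths of semilength n that contain exactly k occurrences of the consecutive factor DDU (a downstep followed by a downstep followed by an upstep) equals 2^{n-1-2k} · C(n-1, 2k) · C_k. -/

import Mathlib

open DyckStep

/-- The number of occurrences of the consecutive factor `DDU` in a list of Dyck steps:
the number of indices `i` such that positions `i`, `i+1`, `i+2` are `D`, `D`, `U`. -/
def countDDU (l : List DyckStep) : ℕ :=
  l.tails.countP fun t => decide ([D, D, U] <+: t)

namespace DDUAux
open List

lemma countDDU_nil : countDDU [] = 0 := rfl

lemma countDDU_cons (x : DyckStep) (l : List DyckStep) :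
    countDDU (x :: l) = (if [D, D, U] <+: x :: l then 1 else 0) + countDDU l := by
  simp only [countDDU, tails_cons, countP_cons, decide_eq_true_eq]
  split <;> simp [add_comm]

lemma countDDU_singleton (x : DyckStep) : countDDU [x] = 0 := by
  rw [countDDU_cons, countDDU_nil]
  have : ¬ ([D, D, U] <+: [x]) := by
    intro h; simpa using h.length_le
  simp [this]

lemma countDDU_pair (x y : DyckStep) : countDDU [x, y] = 0 := by
  rw [countDDU_cons, countDDU_singleton]
  have : ¬ ([D, D, U] <+: [x, y]) := by
    intro h; simpa using h.length_le
  simp [this]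

lemma prefix_cons₃ (a b c : DyckStep) (s : List DyckStep) :
    [D, D, U] <+: a :: b :: c :: s ↔ a = D ∧ b = D ∧ c = U := by
  simp [List.cons_prefix_cons, eq_comm]

lemma countDDU_append_D (r : List DyckStep) (hr : ∀ h : r ≠ [], r.head h = U) :
    ∀ l : List DyckStep, countDDU (l ++ D :: r) =
      countDDU l + countDDU r +
        (if l.getLast? = some D ∧ r ≠ [] then 1 else 0) := by
  have hDr : ¬ ([D, D, U] <+: D :: r) := by
    intro h
    match r, h with
    | D :: r', h => simpa using hr (by simp)
    | [], h => simpa using h.length_le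
  intro l
  induction l with
  | nil =>
    simp only [nil_append, countDDU_nil, getLast?_nil, reduceCtorEq, false_and, if_false]
    rw [countDDU_cons]
    simp [hDr]
  | cons x t ih =>
    match t with
    | [] =>
      simp only [singleton_append, countDDU_singleton]
      rw [countDDU_cons]
      have h1 : [D, D, U] <+: x :: D :: r ↔ x = D ∧ r ≠ [] := by
        match r with
        | [] => simp [List.cons_prefix_cons]
        | y :: r' =>
          have hy : y = U := hr (by simp)
          subst hy
          simp [prefix_cons₃, eq_comm]
      rw [countDDU_cons]
      simp only [hDr, if_false, countDDU_nil, h1, getLast?_singleton]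
      simp only [Option.some.injEq]
      split <;> (try split) <;> simp_all <;> omega
    | [y] =>
      have ihy := ih
      simp only [cons_append, singleton_append, nil_append] at ihy ⊢
      rw [countDDU_cons (x := x) (l := y :: D :: r), ihy, countDDU_pair]
      have h2 : ¬ ([D, D, U] <+: x :: y :: D :: r) := by
        rw [prefix_cons₃]; rintro ⟨-, -, h⟩; exact absurd h (by simp)
      simp [h2, countDDU_singleton]
    | y :: z :: t' =>
      have iht := ih
      simp only [cons_append] at iht ⊢
      rw [countDDU_cons (x := x), iht]
      rw [countDDU_cons (x := x) (l := y :: z :: t')]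
      have h3 : ([D, D, U] <+: x :: y :: z :: (t' ++ D :: r)) ↔
          ([D, D, U] <+: x :: y :: z :: t') := by
        rw [prefix_cons₃, prefix_cons₃]
      have h4 : (x :: y :: z :: t').getLast? = (y :: z :: t').getLast? := by
        simp [List.getLast?_cons_cons]
      rw [h4]
      simp only [h3]
      split <;> split <;> omega

end DDUAux

namespace DDUAux
open DyckWord

lemma semilength_eq_zero {p : DyckWord} : p.semilength = 0 ↔ p = 0 := by
  constructor
  · intro h
    have h2 := p.two_mul_semilength_eq_length
    rw [h, mul_zero] at h2
    exact toList_eq_nil.mp (List.length_eq_zero_iff.mp h2.symm)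
  · rintro rfl; rfl

lemma getLast?_eq_some_D {p : DyckWord} (h : p ≠ 0) :
    p.toList.getLast? = some D := by
  have h' : p.toList ≠ [] := toList_ne_nil.mpr h
  rw [List.getLast?_eq_getLast h', getLast_eq_D]

lemma toList_nest_add (q r : DyckWord) :
    (q.nest + r).toList = U :: (q.toList ++ D :: r.toList) := by
  show ([U] ++ q.toList ++ [D]) ++ r.toList = _
  simp

lemma countDDU_nest_add (q r : DyckWord) :
    countDDU (q.nest + r).toList =
      countDDU q.toList + countDDU r.toList + (if q ≠ 0 ∧ r ≠ 0 then 1 else 0) := by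
  rw [toList_nest_add, countDDU_cons]
  have hU : ¬ ([D, D, U] <+: U :: (q.toList ++ D :: r.toList)) := by
    rw [List.cons_prefix_cons]; rintro ⟨h, -⟩; exact absurd h (by simp)
  rw [if_neg hU, countDDU_append_D r.toList (fun h => head_eq_U r h)]
  have : (q.toList.getLast? = some D ∧ r.toList ≠ []) ↔ (q ≠ 0 ∧ r ≠ 0) := by
    constructor
    · rintro ⟨h1, h2⟩
      refine ⟨fun hq => ?_, toList_ne_nil.mp h2⟩
      subst hq
      rw [show (0 : DyckWord).toList = [] from rfl] at h1
      simp at h1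
    · rintro ⟨h1, h2⟩
      exact ⟨getLast?_eq_some_D h1, toList_ne_nil.mpr h2⟩
  rw [if_congr this rfl rfl]
  omega

end DDUAux

namespace DDUAux
open DyckWord

instance fintypeDb (n : ℕ) : Fintype {p : DyckWord // p.semilength = n} :=
  Fintype.ofEquiv _ (DyckWord.equivTreesOfNumNodesEq n).symm

/-- Dyck words of semilength `n` with `countDDU = k`. -/
abbrev A (n k : ℕ) := {p : DyckWord // p.semilength = n ∧ countDDU p.toList = k}

def aEquiv (n k : ℕ) :
    A n k ≃ {x : {p : DyckWord // p.semilength = n} // countDDU x.1.toList = k} where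
  toFun x := ⟨⟨x.1, x.2.1⟩, x.2.2⟩
  invFun x := ⟨x.1.1, x.1.2, x.2⟩
  left_inv x := rfl
  right_inv x := rfl

instance fintypeA (n k : ℕ) : Fintype (A n k) := Fintype.ofEquiv _ (aEquiv n k).symm

/-- The number of Dyck words of semilength `n` with exactly `k` occurrences of `DDU`. -/
noncomputable def f (n k : ℕ) : ℕ := Nat.card (A n k)

instance uniqueDb0 : Unique {p : DyckWord // p.semilength = 0} where
  default := ⟨0, rfl⟩
  uniq x := Subtype.ext (semilength_eq_zero.mp x.2)

lemma f_zero (k : ℕ) : f 0 k = if k = 0 then 1 else 0 := by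
  rcases eq_or_ne k 0 with rfl | hk
  · rw [if_pos rfl, f]
    have : Nonempty (A 0 0) := ⟨⟨0, rfl, rfl⟩⟩
    have : Subsingleton (A 0 0) := ⟨fun a b => by
      apply Subtype.ext
      rw [semilength_eq_zero.mp a.2.1, semilength_eq_zero.mp b.2.1]⟩
    exact Nat.card_unique
  · rw [if_neg hk, f]
    have : IsEmpty (A 0 k) := ⟨fun x => by
      have h0 : x.1 = 0 := semilength_eq_zero.mp x.2.1
      apply hk
      rw [← x.2.2, h0]
      rfl⟩
    simp

/-- Fiber type for the first-return decomposition. -/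
abbrev Fib (n k a : ℕ) :=
  {qr : {p : DyckWord // p.semilength = a} × {p : DyckWord // p.semilength = n - a} //
    countDDU qr.1.1.toList + countDDU qr.2.1.toList +
      (if 0 < a ∧ 0 < n - a then 1 else 0) = k}

end DDUAux

namespace DDUAux
open DyckWord

lemma sigma_fib_ext {n k : ℕ} {i j : Fin (n + 1)} (x : Fib n k i.1) (y : Fib n k j.1)
    (h : i.1 = j.1) (h1 : x.1.1.1 = y.1.1.1) (h2 : x.1.2.1 = y.1.2.1) :
    (⟨i, x⟩ : Σ a : Fin (n + 1), Fib n k a.1) = ⟨j, y⟩ := by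
  obtain ⟨i, hi⟩ := i
  obtain ⟨j, hj⟩ := j
  dsimp at h
  subst h
  congr 1
  exact Subtype.ext (Prod.ext (Subtype.ext h1) (Subtype.ext h2))

lemma semilength_pos_iff {p : DyckWord} : 0 < p.semilength ↔ p ≠ 0 := by
  rw [Nat.pos_iff_ne_zero]
  exact not_congr semilength_eq_zero

lemma decomp_ne {n k : ℕ} (x : A (n + 1) k) : x.1 ≠ 0 := by
  rw [← semilength_pos_iff, x.2.1]; omega

lemma decomp_sl {n k : ℕ} (x : A (n + 1) k) :
    x.1.insidePart.semilength + x.1.outsidePart.semilength = n := by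
  have := semilength_insidePart_add_semilength_outsidePart_add_one (decomp_ne x)
  rw [x.2.1] at this
  omega

lemma decomp_count {n k : ℕ} (x : A (n + 1) k) :
    countDDU x.1.insidePart.toList + countDDU x.1.outsidePart.toList +
      (if 0 < x.1.insidePart.semilength ∧ 0 < n - x.1.insidePart.semilength
        then 1 else 0) = k := by
  have hsl := decomp_sl x
  have hc := x.2.2
  conv_lhs at hc => rw [← nest_insidePart_add_outsidePart (decomp_ne x)]
  rw [countDDU_nest_add] at hc
  have hiff : (x.1.insidePart ≠ 0 ∧ x.1.outsidePart ≠ 0) ↔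
      (0 < x.1.insidePart.semilength ∧ 0 < n - x.1.insidePart.semilength) := by
    rw [← semilength_pos_iff, ← semilength_pos_iff]
    constructor
    · rintro ⟨h1, h2⟩; exact ⟨h1, by omega⟩
    · rintro ⟨h1, h2⟩; exact ⟨h1, by omega⟩
  rw [if_congr hiff rfl rfl] at hc
  exact hc

def decompEquiv (n k : ℕ) : A (n + 1) k ≃ Σ a : Fin (n + 1), Fib n k a.1 where
  toFun x :=
    ⟨⟨x.1.insidePart.semilength, by have := decomp_sl x; omega⟩,
      ⟨⟨x.1.insidePart, rfl⟩,
       ⟨x.1.outsidePart, by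
          show x.1.outsidePart.semilength = n - x.1.insidePart.semilength
          have := decomp_sl x; omega⟩⟩,
      decomp_count x⟩
  invFun x :=
    ⟨x.2.1.1.1.nest + x.2.1.2.1, by
        rw [semilength_add, semilength_nest, x.2.1.1.2, x.2.1.2.2]
        have := x.1.2
        omega, by
        rw [countDDU_nest_add]
        have hc := x.2.2
        have hiff : (x.2.1.1.1 ≠ 0 ∧ x.2.1.2.1 ≠ 0) ↔
            (0 < (x.1 : ℕ) ∧ 0 < n - (x.1 : ℕ)) := by
          rw [← semilength_pos_iff, ← semilength_pos_iff, x.2.1.1.2, x.2.1.2.2]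
        rw [if_congr hiff rfl rfl]
        exact hc⟩
  left_inv x := Subtype.ext (nest_insidePart_add_outsidePart (decomp_ne x))
  right_inv x := by
    obtain ⟨a, ⟨⟨q, hq⟩, ⟨r, hr⟩⟩, hc⟩ := x
    have hqn : q.nest ≠ 0 := nest_ne_zero
    apply sigma_fib_ext
    · show (q.nest + r).insidePart.semilength = a.1
      rw [insidePart_add hqn, insidePart_nest, hq]
    · show (q.nest + r).insidePart = q
      rw [insidePart_add hqn, insidePart_nest]
    · show (q.nest + r).outsidePart = r
      rw [outsidePart_add hqn, outsidePart_nest, zero_add]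

end DDUAux

namespace DDUAux
open DyckWord

lemma countDDU_zero : countDDU (0 : DyckWord).toList = 0 := rfl

def fibLeftEquiv (n k : ℕ) : Fib n k 0 ≃ A n k where
  toFun x := ⟨x.1.2.1, by have := x.1.2.2; omega, by
    have hc := x.2
    have hq0 : x.1.1.1 = 0 := semilength_eq_zero.mp x.1.1.2
    rw [hq0, countDDU_zero] at hc
    simpa using hc⟩
  invFun y := ⟨(⟨0, rfl⟩, ⟨y.1, by rw [Nat.sub_zero]; exact y.2.1⟩), by
    rw [countDDU_zero, y.2.2]
    simp⟩
  left_inv x := Subtype.ext (Prod.ext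
    (Subtype.ext (semilength_eq_zero.mp x.1.1.2).symm) (Subtype.ext rfl))
  right_inv y := rfl

def fibRightEquiv (n k : ℕ) (hn : 0 < n) : Fib n k n ≃ A n k where
  toFun x := ⟨x.1.1.1, x.1.1.2, by
    have hc := x.2
    have hr0 : x.1.2.1 = 0 := semilength_eq_zero.mp (by have := x.1.2.2; omega)
    rw [hr0, countDDU_zero] at hc
    have hite : (if 0 < n ∧ 0 < n - n then 1 else 0) = 0 := if_neg (by omega)
    omega⟩
  invFun y := ⟨(⟨y.1, y.2.1⟩, ⟨0, by simp⟩), by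
    rw [countDDU_zero, y.2.2]
    have hite : (if 0 < n ∧ 0 < n - n then 1 else 0) = 0 := if_neg (by omega)
    omega⟩
  left_inv x := Subtype.ext (Prod.ext (Subtype.ext rfl)
    (Subtype.ext (semilength_eq_zero.mp (by have := x.1.2.2; omega)).symm))
  right_inv y := rfl

lemma sigma_aik_ext {a b k : ℕ} {i j : Fin k}
    (x : A a i.1 × A b (k - 1 - i.1)) (y : A a j.1 × A b (k - 1 - j.1))
    (h : i.1 = j.1) (h1 : x.1.1 = y.1.1) (h2 : x.2.1 = y.2.1) :
    (⟨i, x⟩ : Σ i : Fin k, A a i.1 × A b (k - 1 - i.1)) = ⟨j, y⟩ := by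
  obtain ⟨i, hi⟩ := i
  obtain ⟨j, hj⟩ := j
  dsimp at h
  subst h
  congr 1
  exact Prod.ext (Subtype.ext h1) (Subtype.ext h2)

def fibMidEquiv (n k a : ℕ) (h1 : 0 < a) (h2 : a < n) :
    Fib n k a ≃ Σ i : Fin k, A a i.1 × A (n - a) (k - 1 - i.1) where
  toFun x :=
    ⟨⟨countDDU x.1.1.1.toList, by
        have hx := x.2
        have hite : (if 0 < a ∧ 0 < n - a then 1 else 0) = 1 := if_pos ⟨h1, by omega⟩
        omega⟩,
      ⟨x.1.1.1, x.1.1.2, rfl⟩,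
      ⟨x.1.2.1, x.1.2.2, by
        show countDDU x.1.2.1.toList = k - 1 - countDDU x.1.1.1.toList
        have hx := x.2
        have hite : (if 0 < a ∧ 0 < n - a then 1 else 0) = 1 := if_pos ⟨h1, by omega⟩
        omega⟩⟩
  invFun y := ⟨(⟨y.2.1.1, y.2.1.2.1⟩, ⟨y.2.2.1, y.2.2.2.1⟩), by
    dsimp only
    have hite : (if 0 < a ∧ 0 < n - a then 1 else 0) = 1 := if_pos ⟨h1, by omega⟩
    have e1 := y.2.1.2.2
    have e2 := y.2.2.2.2
    have hi := y.1.2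
    omega⟩
  left_inv x := Subtype.ext (Prod.ext (Subtype.ext rfl) (Subtype.ext rfl))
  right_inv y := by
    obtain ⟨⟨i, hi⟩, ⟨q, hq1, hq2⟩, ⟨r, hr1, hr2⟩⟩ := y
    exact sigma_aik_ext _ _ hq2 rfl rfl

lemma card_fib_left (n k : ℕ) : Nat.card (Fib n k 0) = f n k :=
  Nat.card_congr (fibLeftEquiv n k)

lemma card_fib_right (n k : ℕ) (hn : 0 < n) : Nat.card (Fib n k n) = f n k :=
  Nat.card_congr (fibRightEquiv n k hn)

lemma card_fib_mid (n k a : ℕ) (h1 : 0 < a) (h2 : a < n) :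
    Nat.card (Fib n k a) = ∑ i ∈ Finset.range k, f a i * f (n - a) (k - 1 - i) := by
  rw [Nat.card_congr (fibMidEquiv n k a h1 h2), Nat.card_eq_fintype_card,
    Fintype.card_sigma]
  rw [← Fin.sum_univ_eq_sum_range (fun i => f a i * f (n - a) (k - 1 - i)) k]
  congr 1
  ext i
  rw [Fintype.card_prod, f, f, Nat.card_eq_fintype_card, Nat.card_eq_fintype_card]

lemma f_succ (n k : ℕ) :
    f (n + 1) k = ∑ a ∈ Finset.range (n + 1), Nat.card (Fib n k a) := by
  rw [f, Nat.card_congr (decompEquiv n k), Nat.card_eq_fintype_card, Fintype.card_sigma,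
    ← Fin.sum_univ_eq_sum_range (fun a => Nat.card (Fib n k a)) (n + 1)]
  congr 1
  ext a
  rw [Nat.card_eq_fintype_card]

end DDUAux

namespace DDUAux

lemma vand (N : ℕ) : ∀ a b : ℕ,
    ∑ x ∈ Finset.range (N + 1), x.choose a * (N - x).choose b =
      (N + 1).choose (a + b + 1) := by
  induction N with
  | zero =>
    intro a b
    rw [Finset.sum_range_one, Nat.sub_self]
    match a, b with
    | 0, 0 => rfl
    | 0, b + 1 =>
      rw [Nat.choose_eq_zero_of_lt (show 0 + 1 < 0 + (b + 1) + 1 by omega)]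
      simp
    | a + 1, b =>
      rw [Nat.choose_eq_zero_of_lt (show 0 + 1 < (a + 1) + b + 1 by omega)]
      simp
  | succ N ih =>
    intro a b
    rw [Finset.sum_range_succ]
    cases b with
    | zero =>
      have h1 : ∀ x ∈ Finset.range (N + 1),
          x.choose a * (N + 1 - x).choose 0 = x.choose a * (N - x).choose 0 := by
        intro x _; simp
      rw [Finset.sum_congr rfl h1, ih a 0, Nat.choose_zero_right, mul_one,
        show a + 0 + 1 = a + 1 from rfl,
        show N + 1 + 1 = (N + 1) + 1 from rfl, Nat.choose_succ_succ (N + 1) a]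
      simp only [Nat.succ_eq_add_one]
      omega
    | succ b =>
      have h1 : ∀ x ∈ Finset.range (N + 1),
          x.choose a * (N + 1 - x).choose (b + 1) =
            x.choose a * (N - x).choose b + x.choose a * (N - x).choose (b + 1) := by
        intro x hx
        rw [Finset.mem_range] at hx
        rw [show N + 1 - x = (N - x) + 1 by omega, Nat.choose_succ_succ]
        ring
      rw [Finset.sum_congr rfl h1, Finset.sum_add_distrib, ih a b, ih a (b + 1)]
      simp only [Nat.sub_self, Nat.choose_zero_succ, mul_zero, add_zero]
      rw [show a + (b + 1) + 1 = (a + b + 1) + 1 by omega,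
        Nat.choose_succ_succ (N + 1) (a + b + 1)]

lemma pow_merge (a b i j : ℕ) :
    (2 ^ (a - 2 * i) * a.choose (2 * i) * catalan i) *
      (2 ^ (b - 2 * j) * b.choose (2 * j) * catalan j) =
    2 ^ (a + b - 2 * i - 2 * j) * (a.choose (2 * i) * b.choose (2 * j)) *
      (catalan i * catalan j) := by
  rcases le_or_gt (2 * i) a with h | h
  · rcases le_or_gt (2 * j) b with h' | h'
    · rw [show a + b - 2 * i - 2 * j = (a - 2 * i) + (b - 2 * j) by omega, pow_add]
      ring
    · rw [Nat.choose_eq_zero_of_lt h']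
      ring
  · rw [Nat.choose_eq_zero_of_lt h]
    ring

/-- The closed form. -/
def g (n k : ℕ) : ℕ :=
  if n = 0 then (if k = 0 then 1 else 0)
  else 2 ^ (n - 1 - 2 * k) * (n - 1).choose (2 * k) * catalan k

lemma catalan_eq_sum (k : ℕ) (hk : 0 < k) :
    catalan k = ∑ i ∈ Finset.range k, catalan i * catalan (k - 1 - i) := by
  obtain ⟨k', rfl⟩ : ∃ k', k = k' + 1 := ⟨k - 1, by omega⟩
  rw [catalan_succ, Fin.sum_univ_eq_sum_range (fun i => catalan i * catalan (k' - i))]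
  simp

end DDUAux

namespace DDUAux

lemma mid_sum (m k : ℕ) (hm : 1 ≤ m) (hk : 1 ≤ k) :
    (∑ x ∈ Finset.range m, ∑ i ∈ Finset.range k, g (x + 1) i * g (m - x) (k - 1 - i))
      = 2 ^ (m + 1 - 2 * k) * (m.choose (2 * k - 1) * catalan k) := by
  have h1 : ∀ x ∈ Finset.range m,
      (∑ i ∈ Finset.range k, g (x + 1) i * g (m - x) (k - 1 - i))
        = ∑ i ∈ Finset.range k, 2 ^ (m + 1 - 2 * k) *
            (x.choose (2 * i) * (m - 1 - x).choose (2 * (k - 1 - i))) *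
            (catalan i * catalan (k - 1 - i)) := by
    intro x hx
    rw [Finset.mem_range] at hx
    apply Finset.sum_congr rfl
    intro i hi
    rw [Finset.mem_range] at hi
    have e1 : g (x + 1) i = 2 ^ (x - 2 * i) * x.choose (2 * i) * catalan i := by
      rw [g, if_neg (by omega), show x + 1 - 1 = x from rfl]
    have e2 : g (m - x) (k - 1 - i) =
        2 ^ ((m - 1 - x) - 2 * (k - 1 - i)) * (m - 1 - x).choose (2 * (k - 1 - i)) *
          catalan (k - 1 - i) := by
      rw [g, if_neg (by omega), show m - x - 1 = m - 1 - x by omega]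
    rw [e1, e2, pow_merge,
      show x + (m - 1 - x) - 2 * i - 2 * (k - 1 - i) = m + 1 - 2 * k by omega]
  rw [Finset.sum_congr rfl h1, Finset.sum_comm]
  have h2 : ∀ i ∈ Finset.range k,
      (∑ x ∈ Finset.range m, 2 ^ (m + 1 - 2 * k) *
          (x.choose (2 * i) * (m - 1 - x).choose (2 * (k - 1 - i))) *
          (catalan i * catalan (k - 1 - i)))
        = 2 ^ (m + 1 - 2 * k) * m.choose (2 * k - 1) *
            (catalan i * catalan (k - 1 - i)) := by
    intro i hi
    rw [Finset.mem_range] at hi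
    have hv := vand (m - 1) (2 * i) (2 * (k - 1 - i))
    rw [show m - 1 + 1 = m by omega,
      show 2 * i + 2 * (k - 1 - i) + 1 = 2 * k - 1 by omega] at hv
    have step : ∀ x ∈ Finset.range m,
        2 ^ (m + 1 - 2 * k) *
          (x.choose (2 * i) * (m - 1 - x).choose (2 * (k - 1 - i))) *
          (catalan i * catalan (k - 1 - i))
        = (2 ^ (m + 1 - 2 * k) * (catalan i * catalan (k - 1 - i))) *
            (x.choose (2 * i) * (m - 1 - x).choose (2 * (k - 1 - i))) := by
      intro x _; ring
    rw [Finset.sum_congr rfl step, ← Finset.mul_sum, hv]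
    ring
  rw [Finset.sum_congr rfl h2]
  have step2 : ∀ i ∈ Finset.range k,
      2 ^ (m + 1 - 2 * k) * m.choose (2 * k - 1) * (catalan i * catalan (k - 1 - i))
        = (2 ^ (m + 1 - 2 * k) * m.choose (2 * k - 1)) *
            (catalan i * catalan (k - 1 - i)) := by
    intro i _; ring
  rw [Finset.sum_congr rfl step2, ← Finset.mul_sum, ← catalan_eq_sum k hk]
  ring

lemma g_one (k : ℕ) : g 1 k = if k = 0 then 1 else 0 := by
  rcases Nat.eq_zero_or_pos k with rfl | hk
  · simp [g]
  · rw [g, if_neg one_ne_zero, if_neg (by omega),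
      Nat.choose_eq_zero_of_lt (show 1 - 1 < 2 * k by omega)]
    ring

lemma g_succ_succ (m k : ℕ) :
    g (m + 2) k = 2 * g (m + 1) k +
      ∑ x ∈ Finset.range m, ∑ i ∈ Finset.range k, g (x + 1) i * g (m - x) (k - 1 - i) := by
  rcases Nat.eq_zero_or_pos k with rfl | hk
  · have hz : ∀ x ∈ Finset.range m,
        (∑ i ∈ Finset.range 0, g (x + 1) i * g (m - x) (0 - 1 - i)) = 0 := by
      intro x _; simp
    rw [Finset.sum_congr rfl hz, Finset.sum_const, smul_zero, add_zero]
    rw [g, if_neg (by omega), g, if_neg (by omega)]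
    simp only [mul_zero, Nat.sub_zero, Nat.choose_zero_right, mul_one, catalan_zero]
    rw [show m + 2 - 1 = (m + 1 - 1) + 1 by omega, pow_succ]
    ring
  · rcases Nat.eq_zero_or_pos m with rfl | hm
    · rw [Finset.sum_range_zero, add_zero, g, if_neg (by omega), g, if_neg (by omega),
        Nat.choose_eq_zero_of_lt (show 0 + 2 - 1 < 2 * k by omega),
        Nat.choose_eq_zero_of_lt (show 0 + 1 - 1 < 2 * k by omega)]
      ring
    · rw [mid_sum m k hm hk, g, if_neg (by omega), g, if_neg (by omega)]
      have pascal : (m + 2 - 1).choose (2 * k) = m.choose (2 * k - 1) + m.choose (2 * k) := by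
        rw [show m + 2 - 1 = m + 1 by omega, show 2 * k = (2 * k - 1) + 1 by omega,
          Nat.choose_succ_succ m (2 * k - 1)]
        simp only [Nat.succ_eq_add_one]
        rw [show 2 * k - 1 + 1 = 2 * k by omega]
      rw [pascal, show m + 2 - 1 - 2 * k = m + 1 - 2 * k by omega,
        show m + 1 - 1 = m from rfl]
      rcases le_or_gt (2 * k) m with h | h
      · have hpow : (2 : ℕ) ^ (m + 1 - 2 * k) = 2 * 2 ^ (m - 2 * k) := by
          rw [show m + 1 - 2 * k = (m - 2 * k) + 1 by omega, pow_succ]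
          ring
        rw [hpow]
        ring
      · rw [Nat.choose_eq_zero_of_lt (show m < 2 * k by omega)]
        ring

lemma f_eq_g : ∀ n k, f n k = g n k := by
  intro n
  induction n using Nat.strong_induction_on with
  | _ n ih =>
    match n with
    | 0 =>
      intro k
      rw [f_zero, g]
      simp
    | 1 =>
      intro k
      rw [f_succ, Finset.sum_range_one, card_fib_left, f_zero, g_one]
    | (m + 2) =>
      intro k
      rw [f_succ, Finset.sum_range_succ, card_fib_right _ _ (by omega : 0 < m + 1),
        Finset.sum_range_succ', card_fib_left]
      have hmid : ∀ x ∈ Finset.range m,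
          Nat.card (Fib (m + 1) k (x + 1)) =
            ∑ i ∈ Finset.range k, g (x + 1) i * g (m - x) (k - 1 - i) := by
        intro x hx
        rw [Finset.mem_range] at hx
        rw [card_fib_mid (m + 1) k (x + 1) (by omega) (by omega)]
        apply Finset.sum_congr rfl
        intro i _
        rw [ih (x + 1) (by omega), show m + 1 - (x + 1) = m - x by omega,
          ih (m - x) (by omega)]
      rw [Finset.sum_congr rfl hmid, ih (m + 1) (by omega), g_succ_succ]
      ring

end DDUAux


/-- The number of Dyck paths of semilength `n` with exactly `k` occurrences of `DDU`
equals `2^(n-1-2k) * ((n-1) choose 2k) * C k`. -/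
theorem card_dyckWord_with_k_DDU (n k : ℕ) (hn : 1 ≤ n) :
    Nat.card {p : DyckWord // p.semilength = n ∧ countDDU p.toList = k} =
      2 ^ (n - 1 - 2 * k) * (n - 1).choose (2 * k) * catalan k := by
  have h := DDUAux.f_eq_g n k
  rw [show Nat.card {p : DyckWord // p.semilength = n ∧ countDDU p.toList = k}
      = DDUAux.f n k from rfl] at *
  rw [h]
  unfold DDUAux.g
  rw [if_neg (by omega)]
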